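/- arXiv:1604.03153 — 3 statements merged into one kernel-verified Lean document; each statement's English description precedes it below -/
import Mathlib

section
/- Let N ∈ ℕ and p_1,...,p_N ∈ (0,1) with (1/N)∑_{i=1}^N p_i = 1/2. Define θ = (∑_{j=1}^N ∑_{i=1}^j (1-p_j)(2p_i-1)) / (2∑_{j=1}^N p_j(1-p_j)) and θ̃ = (∑_{j=1}^N ∑_{i=1}^j p_j(1-2p_i)) / (2∑_{j=1}^N p_j(1-p_j)). Then θ + θ̃ = 1 - N/(4∑_{j=1}^N p_j(1-p_j)). -/
open Finset

lemma key_sum_sq (N : ℕ) (a : ℕ → ℝ) :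
    2 * ∑ j ∈ Icc 1 N, a j * ∑ i ∈ Icc 1 j, a i =
      (∑ j ∈ Icc 1 N, a j) ^ 2 + ∑ j ∈ Icc 1 N, a j ^ 2 := by
  induction N with
  | zero => simp
  | succ n ih =>
    simp only [Finset.sum_Icc_succ_top (Nat.le_add_left 1 n)]
    linear_combination ih

theorem theta_plus_thetaTilde (N : ℕ) (hN : 0 < N) (p : ℕ → ℝ)
    (hp : ∀ i ∈ Icc 1 N, 0 < p i ∧ p i < 1)
    (hmean : (1 / N : ℝ) * ∑ i ∈ Icc 1 N, p i = 1 / 2) :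
    (∑ j ∈ Icc 1 N, ∑ i ∈ Icc 1 j, (1 - p j) * (2 * p i - 1)) /
        (2 * ∑ j ∈ Icc 1 N, p j * (1 - p j)) +
      (∑ j ∈ Icc 1 N, ∑ i ∈ Icc 1 j, p j * (1 - 2 * p i)) /
        (2 * ∑ j ∈ Icc 1 N, p j * (1 - p j)) =
      1 - (N : ℝ) / (4 * ∑ j ∈ Icc 1 N, p j * (1 - p j)) := by
  have hne : (Icc 1 N).Nonempty := ⟨1, by simp [hN]; omega⟩
  have hD : 0 < ∑ j ∈ Icc 1 N, p j * (1 - p j) := by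
    refine Finset.sum_pos (fun i hi => ?_) hne
    obtain ⟨h1, h2⟩ := hp i hi
    nlinarith
  set D := ∑ j ∈ Icc 1 N, p j * (1 - p j) with hDdef
  have hNne : (N : ℝ) ≠ 0 := Nat.cast_ne_zero.2 hN.ne'
  have hps : ∑ i ∈ Icc 1 N, p i = N / 2 := by
    field_simp at hmean
    linarith
  have hcard : ((Icc 1 N).card : ℝ) = N := by simp
  have hsum0 : ∑ j ∈ Icc 1 N, (2 * p j - 1) = 0 := by
    rw [Finset.sum_sub_distrib, ← Finset.mul_sum, hps, Finset.sum_const]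
    simp
    ring
  have hkey : 2 * ∑ j ∈ Icc 1 N, (2 * p j - 1) * ∑ i ∈ Icc 1 j, (2 * p i - 1) =
      (∑ j ∈ Icc 1 N, (2 * p j - 1)) ^ 2 + ∑ j ∈ Icc 1 N, (2 * p j - 1) ^ 2 := by
    simpa using key_sum_sq N (fun j => 2 * p j - 1)
  rw [hsum0] at hkey
  have hQ : ∑ j ∈ Icc 1 N, (2 * p j - 1) ^ 2 = N - 4 * D := by
    have h : ∀ j ∈ Icc 1 N, (2 * p j - 1) ^ 2 = 1 - 4 * (p j * (1 - p j)) := by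
      intro j _; ring
    rw [Finset.sum_congr rfl h, Finset.sum_sub_distrib, ← Finset.mul_sum, Finset.sum_const,
      nsmul_eq_mul, hcard, hDdef]
    ring
  have hAB : (∑ j ∈ Icc 1 N, ∑ i ∈ Icc 1 j, (1 - p j) * (2 * p i - 1)) +
      ∑ j ∈ Icc 1 N, ∑ i ∈ Icc 1 j, p j * (1 - 2 * p i) =
      -∑ j ∈ Icc 1 N, (2 * p j - 1) * ∑ i ∈ Icc 1 j, (2 * p i - 1) := by
    apply eq_neg_of_add_eq_zero_left
    rw [← Finset.sum_add_distrib, ← Finset.sum_add_distrib]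
    refine Finset.sum_eq_zero fun j _ => ?_
    rw [Finset.mul_sum, ← Finset.sum_add_distrib, ← Finset.sum_add_distrib]
    exact Finset.sum_eq_zero fun i _ => by ring
  have hS : -∑ j ∈ Icc 1 N, (2 * p j - 1) * ∑ i ∈ Icc 1 j, (2 * p i - 1) =
      (4 * D - N) / 2 := by
    rw [hQ] at hkey
    linarith
  rw [← add_div, hAB, hS]
  have hD' : D ≠ 0 := hD.ne'
  field_simp
  ring
end

section
/- Let (X_n) be a nearest-neighbor walk on ℤ started at 0, λ_{x,m} the time of the (m+1)-st visit to x, L(n;y) = #{k < n : X_k = y} the site local time, and E^{(x,m)}_y, D^{(x,m)}_y the directed edge local times as above. Then L(λ_{x,m}; y) = D^{(x,m)}_y + E^{(x,m)}_y for all y, and moreover L(λ_{x,m}; x) = m, L(λ_{x,m}; y) = D^{(x,m)}_y + D^{(x,m)}_{y+1} + 1{0 ≤ y < x} for y < x, and L(λ_{x,m}; y) = E^{(x,m)}_{y-1} + E^{(x,m)}_y + 1{x < y ≤ 0} for y > x. -/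
open Finset

private lemma card_filter_succ (P : ℕ → Prop) [DecidablePred P] (n : ℕ) :
    ((Finset.range (n + 1)).filter P).card
      = ((Finset.range n).filter P).card + (if P n then 1 else 0) := by
  rw [Finset.range_add_one, Finset.filter_insert]
  split_ifs with h
  · rw [Finset.card_insert_of_notMem (by simp)]
  · simp

private lemma crossing (X : ℕ → ℤ) (hnn : ∀ k : ℕ, |X (k + 1) - X k| = 1) (z : ℤ) :
    ∀ n : ℕ,
      ((Finset.range n).filter (fun k => X k = z ∧ X (k + 1) = z + 1)).card
          + (if z < X 0 then 1 else 0)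
        = ((Finset.range n).filter (fun k => X k = z + 1 ∧ X (k + 1) = z)).card
          + (if z < X n then 1 else 0) := by
  intro n
  induction n with
  | zero => simp
  | succ n ih =>
    have h2 : X (n + 1) = X n + 1 ∨ X (n + 1) = X n - 1 := by
      rcases (abs_eq (by norm_num : (0:ℤ) ≤ 1)).mp (hnn n) with h' | h'
      · left; linarith
      · right; linarith
    rw [card_filter_succ, card_filter_succ]
    rcases h2 with h' | h' <;> split_ifs at ih ⊢ <;> omega

theorem site_local_time_from_edge_local_times
    (X : ℕ → ℤ) (hX0 : X 0 = 0)
    (hnn : ∀ k : ℕ, |X (k + 1) - X k| = 1)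
    (x : ℤ) (m n : ℕ)
    (hend : X n = x)
    (hcount : ((Finset.range n).filter (fun k => X k = x)).card = m)
    (L : ℤ → ℕ) (E D : ℤ → ℕ)
    (hL : ∀ y : ℤ, L y = ((Finset.range n).filter (fun k => X k = y)).card)
    (hE : ∀ y : ℤ, E y = ((Finset.range n).filter (fun k => X k = y ∧ X (k + 1) = y + 1)).card)
    (hD : ∀ y : ℤ, D y = ((Finset.range n).filter (fun k => X k = y ∧ X (k + 1) = y - 1)).card) :
    (∀ y : ℤ, L y = D y + E y) ∧
      L x = m ∧
      (∀ y : ℤ, y < x → L y = D y + D (y + 1) + (if 0 ≤ y ∧ y < x then 1 else 0)) ∧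
      (∀ y : ℤ, x < y → L y = E (y - 1) + E y + (if x < y ∧ y ≤ 0 then 1 else 0)) := by
  have hLDE : ∀ y : ℤ, L y = D y + E y := by
    intro y
    rw [hL, hD, hE]
    have hun : (Finset.range n).filter (fun k => X k = y)
        = ((Finset.range n).filter (fun k => X k = y ∧ X (k + 1) = y - 1))
          ∪ ((Finset.range n).filter (fun k => X k = y ∧ X (k + 1) = y + 1)) := by
      ext k
      simp only [Finset.mem_union, Finset.mem_filter]
      constructor
      · rintro ⟨hk, hky⟩
        rcases (abs_eq (by norm_num : (0:ℤ) ≤ 1)).mp (hnn k) with h' | h'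
        · right; exact ⟨hk, hky, by linarith⟩
        · left; exact ⟨hk, hky, by linarith⟩
      · rintro (⟨hk, hky, _⟩ | ⟨hk, hky, _⟩) <;> exact ⟨hk, hky⟩
    have hdis : Disjoint ((Finset.range n).filter (fun k => X k = y ∧ X (k + 1) = y - 1))
        ((Finset.range n).filter (fun k => X k = y ∧ X (k + 1) = y + 1)) := by
      rw [Finset.disjoint_left]
      intro k hk1 hk2
      simp only [Finset.mem_filter] at hk1 hk2
      omega
    rw [hun, Finset.card_union_of_disjoint hdis]
  have hcross : ∀ z : ℤ, E z + (if z < 0 then 1 else 0)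
      = D (z + 1) + (if z < x then 1 else 0) := by
    intro z
    have := crossing X hnn z n
    rw [hX0, hend] at this
    rw [hE, hD]
    simp only [add_sub_cancel_right]
    exact this
  refine ⟨hLDE, by rw [hL, hcount], ?_, ?_⟩
  · intro y hy
    have h1 := hcross y
    have h2 := hLDE y
    split_ifs at h1 ⊢ <;> omega
  · intro y hy
    have h1 := hcross (y - 1)
    have h2 := hLDE y
    rw [sub_add_cancel] at h1
    split_ifs at h1 ⊢ <;> omega
end

section
/- Suppose a continuous process Z satisfies Z_0 = 0 and Z_t = B_t + α sup_{s≤t} Z_s + β inf_{s≤t} Z_s for all t > 0, where B is a continuous function with B_0 = 0 and α, β < 1. Then for every t, sup_{s≤t} Z_s ≤ (1-α)^{-1} sup_{s≤t} |B_s| + |β|(1-α)^{-1} |inf_{s≤t} Z_s|, and if additionally α, β ≥ 0 then sup_{s≤t}|Z_s| ≤ (1 - max(α,β))^{-1} sup_{s≤t}|B_s|. -/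
open Set

/-- A priori bounds for solutions of the perturbed Brownian motion functional equation
`Z_t = B_t + α sup_{s≤t} Z_s + β inf_{s≤t} Z_s` with `α, β < 1`. -/
theorem perturbed_bm_apriori_bound
    (Z B : ℝ → ℝ) (hZcont : Continuous Z) (hBcont : Continuous B)
    (hZ0 : Z 0 = 0) (hB0 : B 0 = 0)
    (α β : ℝ) (hα : α < 1) (hβ : β < 1)
    (heq : ∀ t : ℝ, 0 < t →
      Z t = B t + α * sSup (Z '' Icc 0 t) + β * sInf (Z '' Icc 0 t)) :
    ∀ t : ℝ, 0 ≤ t →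
      (sSup (Z '' Icc 0 t) ≤
          (1 - α)⁻¹ * sSup ((fun s => |B s|) '' Icc 0 t) +
            |β| * (1 - α)⁻¹ * |sInf (Z '' Icc 0 t)|) ∧
        (0 ≤ α → 0 ≤ β →
          sSup ((fun s => |Z s|) '' Icc 0 t) ≤
            (1 - max α β)⁻¹ * sSup ((fun s => |B s|) '' Icc 0 t)) := by
  intro t ht
  have h0K : (0:ℝ) ∈ Icc (0:ℝ) t := ⟨le_refl 0, ht⟩
  have hne : (Icc (0:ℝ) t).Nonempty := ⟨0, h0K⟩
  have hK : IsCompact (Icc (0:ℝ) t) := isCompact_Icc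
  have hbddZa : BddAbove (Z '' Icc 0 t) := (hK.image hZcont).bddAbove
  have hbddZb : BddBelow (Z '' Icc 0 t) := (hK.image hZcont).bddBelow
  have hbddB : BddAbove ((fun s => |B s|) '' Icc 0 t) := (hK.image hBcont.abs).bddAbove
  set M := sSup (Z '' Icc 0 t) with hMdef
  set m := sInf (Z '' Icc 0 t) with hmdef
  set SB := sSup ((fun s => |B s|) '' Icc 0 t) with hSBdef
  have hZleM : ∀ s ∈ Icc (0:ℝ) t, Z s ≤ M := fun s hs => le_csSup hbddZa ⟨s, hs, rfl⟩
  have hmleZ : ∀ s ∈ Icc (0:ℝ) t, m ≤ Z s := fun s hs => csInf_le hbddZb ⟨s, hs, rfl⟩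
  have hBleSB : ∀ s ∈ Icc (0:ℝ) t, |B s| ≤ SB := fun s hs => le_csSup hbddB ⟨s, hs, rfl⟩
  have hM0 : 0 ≤ M := by have := hZleM 0 h0K; rwa [hZ0] at this
  have hm0 : m ≤ 0 := by have := hmleZ 0 h0K; rwa [hZ0] at this
  have hSB0 : 0 ≤ SB := by
    have := hBleSB 0 h0K
    rw [hB0, abs_zero] at this
    exact this
  have h1α : (0:ℝ) < 1 - α := by linarith
  -- maximizer
  obtain ⟨u, huK, humax⟩ : ∃ u ∈ Icc (0:ℝ) t, ∀ s ∈ Icc (0:ℝ) t, Z s ≤ Z u := by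
    obtain ⟨u, huK, hu⟩ := hK.exists_isMaxOn hne hZcont.continuousOn
    exact ⟨u, huK, fun s hs => hu hs⟩
  have hMu : M = Z u :=
    IsGreatest.csSup_eq ⟨⟨u, huK, rfl⟩, by rintro _ ⟨x, hx, rfl⟩; exact humax x hx⟩
  -- key identity for the maximizer (when u > 0)
  have hMkey : u = 0 ∨ ∃ m', m ≤ m' ∧ m' ≤ 0 ∧ (1 - α) * M = B u + β * m' := by
    rcases eq_or_lt_of_le huK.1 with h0u | h0u
    · exact Or.inl h0u.symm
    · right
      have hsub : Icc (0:ℝ) u ⊆ Icc (0:ℝ) t := Icc_subset_Icc_right huK.2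
      have huu : u ∈ Icc (0:ℝ) u := ⟨h0u.le, le_refl u⟩
      have h0u' : (0:ℝ) ∈ Icc (0:ℝ) u := ⟨le_refl 0, h0u.le⟩
      have hbdd1 : BddAbove (Z '' Icc 0 u) := (isCompact_Icc.image hZcont).bddAbove
      have hbdd2 : BddBelow (Z '' Icc 0 u) := (isCompact_Icc.image hZcont).bddBelow
      have hM' : sSup (Z '' Icc 0 u) = M := by
        apply le_antisymm
        · exact csSup_le_csSup hbddZa ⟨Z u, u, huu, rfl⟩ (image_mono (f := Z) hsub)
        · rw [hMu]; exact le_csSup hbdd1 ⟨u, huu, rfl⟩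
      refine ⟨sInf (Z '' Icc 0 u), ?_, ?_, ?_⟩
      · exact csInf_le_csInf hbddZb ⟨Z u, u, huu, rfl⟩ (image_mono (f := Z) hsub)
      · exact csInf_le hbdd2 ⟨0, h0u', hZ0⟩
      · have h := heq u h0u
        rw [hM', ← hMu] at h
        linarith
  -- minimizer
  obtain ⟨v, hvK, hvmin⟩ : ∃ v ∈ Icc (0:ℝ) t, ∀ s ∈ Icc (0:ℝ) t, Z v ≤ Z s := by
    obtain ⟨v, hvK, hv⟩ := hK.exists_isMinOn hne hZcont.continuousOn
    exact ⟨v, hvK, fun s hs => hv hs⟩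
  have hmv : m = Z v :=
    IsLeast.csInf_eq ⟨⟨v, hvK, rfl⟩, by rintro _ ⟨x, hx, rfl⟩; exact hvmin x hx⟩
  have hmkey : v = 0 ∨ ∃ M'', 0 ≤ M'' ∧ (1 - β) * m = B v + α * M'' := by
    rcases eq_or_lt_of_le hvK.1 with h0v | h0v
    · exact Or.inl h0v.symm
    · right
      have hsub : Icc (0:ℝ) v ⊆ Icc (0:ℝ) t := Icc_subset_Icc_right hvK.2
      have hvv : v ∈ Icc (0:ℝ) v := ⟨h0v.le, le_refl v⟩
      have h0v' : (0:ℝ) ∈ Icc (0:ℝ) v := ⟨le_refl 0, h0v.le⟩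
      have hbdd1 : BddAbove (Z '' Icc 0 v) := (isCompact_Icc.image hZcont).bddAbove
      have hbdd2 : BddBelow (Z '' Icc 0 v) := (isCompact_Icc.image hZcont).bddBelow
      have hm'' : sInf (Z '' Icc 0 v) = m := by
        apply le_antisymm
        · rw [hmv]; exact csInf_le hbdd2 ⟨v, hvv, rfl⟩
        · exact csInf_le_csInf hbddZb ⟨Z v, v, hvv, rfl⟩ (image_mono (f := Z) hsub)
      refine ⟨sSup (Z '' Icc 0 v), ?_, ?_⟩
      · exact le_csSup hbdd1 ⟨0, h0v', hZ0⟩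
      · have h := heq v h0v
        rw [hm'', ← hmv] at h
        linarith
  constructor
  · -- first bound
    rcases hMkey with h0u | ⟨m', hmm', hm'0, hid⟩
    · have hMz : M = 0 := by rw [hMu, h0u, hZ0]
      rw [hMz]
      positivity
    · have h1 : B u ≤ SB := le_trans (le_abs_self _) (hBleSB u huK)
      have h2 : β * m' ≤ |β| * |m| := by
        calc β * m' ≤ |β * m'| := le_abs_self _
          _ = |β| * |m'| := abs_mul _ _
          _ ≤ |β| * |m| := by
              apply mul_le_mul_of_nonneg_left _ (abs_nonneg β)
              rw [abs_of_nonpos hm'0, abs_of_nonpos hm0]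
              linarith
      have hkey : (1 - α) * M ≤ SB + |β| * |m| := by linarith
      have : M ≤ (1 - α)⁻¹ * (SB + |β| * |m|) := by
        rw [le_inv_mul_iff₀ h1α]
        linarith
      calc M ≤ (1 - α)⁻¹ * (SB + |β| * |m|) := this
        _ = (1 - α)⁻¹ * SB + |β| * (1 - α)⁻¹ * |m| := by ring
  · -- second bound
    intro hα0 hβ0
    set γ := max α β with hγdef
    have hγ1 : γ < 1 := max_lt hα hβ
    have h1γ : (0:ℝ) < 1 - γ := by linarith
    have hαγ : α ≤ γ := le_max_left _ _
    have hβγ : β ≤ γ := le_max_right _ _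
    have hMb : (1 - γ) * M ≤ SB := by
      rcases hMkey with h0u | ⟨m', hmm', hm'0, hid⟩
      · have hMz : M = 0 := by rw [hMu, h0u, hZ0]
        rw [hMz, mul_zero]; exact hSB0
      · have h1 : B u ≤ SB := le_trans (le_abs_self _) (hBleSB u huK)
        have h2 : β * m' ≤ 0 := mul_nonpos_of_nonneg_of_nonpos hβ0 hm'0
        nlinarith
    have hmb : (1 - γ) * (-m) ≤ SB := by
      rcases hmkey with h0v | ⟨M'', hM''0, hid⟩
      · have hmz : m = 0 := by rw [hmv, h0v, hZ0]
        rw [hmz, neg_zero, mul_zero]; exact hSB0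
      · have h1 : -B v ≤ SB := le_trans (neg_le_abs _) (hBleSB v hvK)
        have h2 : 0 ≤ α * M'' := mul_nonneg hα0 hM''0
        nlinarith
    have hMfin : M ≤ (1 - γ)⁻¹ * SB := by
      rw [le_inv_mul_iff₀ h1γ]; linarith
    have hmfin : -m ≤ (1 - γ)⁻¹ * SB := by
      rw [le_inv_mul_iff₀ h1γ]; linarith
    apply csSup_le (hne.image _)
    rintro _ ⟨s, hs, rfl⟩
    rw [abs_le]
    constructor
    · have := hmleZ s hs
      linarith
    · have := hZleM s hs
      linarith
end
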